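/- Let D be an n×n positive definite diagonal matrix and A a symmetric n×n matrix. If 0 ⪯ A (A is positive semidefinite) and (1-ε)(D - A) ⪯ D - Ã ⪯ (1+ε)(D - A) for some symmetric matrix Ã and ε ≥ 0, then (1-ε)(D + A) ⪯ D + Ã ⪯ (1+ε)(D + A). -/

import Mathlib

open Matrix

private lemma smul_psd {n : ℕ} {A : Matrix (Fin n) (Fin n) ℝ} {c : ℝ} (hc : 0 ≤ c)
    (hA : A.PosSemidef) : (c • A).PosSemidef :=
  ⟨by simp [Matrix.IsHermitian, conjTranspose_smul, show Aᵀ = A from hA.1], fun x => by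
    convert mul_nonneg hc (hA.2 x) using 1
    simp only [Finsupp.mul_sum]
    exact Finsupp.sum_congr fun i _ => Finsupp.sum_congr fun j _ => by
      rw [Matrix.smul_apply, smul_eq_mul]; ring⟩

theorem stmt_3 (n : ℕ) (D A At : Matrix (Fin n) (Fin n) ℝ)
    (hD : D.PosDef) (hDdiag : D.IsDiag) (hA : A.IsSymm) (hAt : At.IsSymm)
    (ε : ℝ) (hε : 0 ≤ ε)
    (hApsd : A.PosSemidef)
    (h1 : ((D - At) - (1 - ε) • (D - A)).PosSemidef)
    (h2 : ((1 + ε) • (D - A) - (D - At)).PosSemidef) :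
    ((D + At) - (1 - ε) • (D + A)).PosSemidef ∧
      ((1 + ε) • (D + A) - (D + At)).PosSemidef := by
  have hsmul := smul_psd (c := 2 * ε) (by linarith) hApsd
  constructor
  · have key : (D + At) - (1 - ε) • (D + A)
        = ((1 + ε) • (D - A) - (D - At)) + (2 * ε) • A := by module
    rw [key]; exact h2.add hsmul
  · have key : (1 + ε) • (D + A) - (D + At)
        = ((D - At) - (1 - ε) • (D - A)) + (2 * ε) • A := by module
    rw [key]; exact h1.add hsmul
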